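/- (Hamiltonian completion preserves flow and target map) For any labelled open graph G = (V,E,I,O,λ,α) with Pauli flow, there exists a labelled open graph G' = (V',E',I,O,λ',α') with Pauli flow such that: (i) V ⊆ V', all vertices in V'∖V are labelled Z (measured in the Z basis), (ii) the underlying graph of G' has a Hamiltonian path, and (iii) the target linear maps of G and G' are equal (Z-measured isolated-purpose vertices act trivially). -/

import Mathlib

open scoped Classical

/-- Measurement labels: planes XY, XZ, YZ and Pauli bases X, Y, Z. -/
inductive MeasLabel : Type
  | XY | XZ | YZ | X | Y | Z
  deriving DecidableEq

/-- The odd neighbourhood `Odd(K) = {u : |N(u) ∩ K| odd}` of a set of vertices. -/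
noncomputable def oddNbhd {V : Type*} [Fintype V] (G : SimpleGraph V) (K : Finset V) :
    Finset V :=
  Finset.univ.filter fun u => Odd (K.filter fun w => G.Adj u w).card

/-- `(p, lt)` is a Pauli flow for the labelled open graph `(G, I, O, lam)`:
`lt` is a strict partial order and conditions 1–9 of the definition of Pauli
flow hold for every non-output vertex (with `p v ⊆ V ∖ I`). -/
noncomputable def IsPauliFlow {V : Type*} [Fintype V] (G : SimpleGraph V)
    (I O : Finset V) (lam : V → MeasLabel) (p : V → Finset V)
    (lt : V → V → Prop) : Prop :=
  (∀ v, ¬ lt v v) ∧ (∀ a b c, lt a b → lt b c → lt a c) ∧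
  ∀ v, v ∉ O →
    ((∀ w ∈ p v, w ∉ I) ∧
     (∀ w ∈ p v, lam w ≠ .X → lam w ≠ .Y → v ≠ w → lt v w) ∧
     (∀ w ∈ oddNbhd G (p v), lam w ≠ .Y → lam w ≠ .Z → v ≠ w → lt v w) ∧
     (∀ w, (lt w v ∨ w = v) → lam w = .Y → v ≠ w →
        (w ∈ p v ↔ w ∈ oddNbhd G (p v))) ∧
     (lam v = .XY → v ∉ p v ∧ v ∈ oddNbhd G (p v)) ∧
     (lam v = .XZ → v ∈ p v ∧ v ∈ oddNbhd G (p v)) ∧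
     (lam v = .YZ → v ∈ p v ∧ v ∉ oddNbhd G (p v)) ∧
     (lam v = .X → v ∈ oddNbhd G (p v)) ∧
     (lam v = .Z → v ∈ p v) ∧
     (lam v = .Y →
        ((v ∉ p v ∧ v ∈ oddNbhd G (p v)) ∨ (v ∈ p v ∧ v ∉ oddNbhd G (p v)))))

/-- A labelled open graph has Pauli flow if some `(p, lt)` is a Pauli flow. -/
noncomputable def HasPauliFlow {V : Type*} [Fintype V] (G : SimpleGraph V)
    (I O : Finset V) (lam : V → MeasLabel) : Prop :=
  ∃ p lt, IsPauliFlow G I O lam p lt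

set_option linter.unusedSectionVars false
section AuxA
variable {V : Type*}

/-- Extended graph: original graph plus a path alternating new/old vertices. -/
def extGraph (G : SimpleGraph V) (k : ℕ) (e : Fin k ≃ V) :
    SimpleGraph (V ⊕ Fin (k + 1)) where
  Adj x y := match x, y with
    | .inl a, .inl b => G.Adj a b
    | .inl a, .inr j => ∃ i : Fin k, e i = a ∧ ((i : ℕ) = j ∨ (i : ℕ) + 1 = j)
    | .inr j, .inl a => ∃ i : Fin k, e i = a ∧ ((i : ℕ) = j ∨ (i : ℕ) + 1 = j)
    | .inr _, .inr _ => False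
  symm := by
    constructor
    rintro (a | j) (b | j') h
    · exact G.adj_symm h
    · exact h
    · exact h
    · exact h
  loopless := by
    constructor
    rintro (a | j) h
    · exact G.irrefl h
    · exact h

@[simp] lemma extGraph_adj_inl_inl (G : SimpleGraph V) (k : ℕ) (e : Fin k ≃ V) (a b : V) :
    (extGraph G k e).Adj (.inl a) (.inl b) ↔ G.Adj a b := Iff.rfl

@[simp] lemma extGraph_adj_inr_inr (G : SimpleGraph V) (k : ℕ) (e : Fin k ≃ V)
    (j j' : Fin (k+1)) : ¬ (extGraph G k e).Adj (.inr j) (.inr j') := fun h => h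

lemma extGraph_adj_inr_inl (G : SimpleGraph V) (k : ℕ) (e : Fin k ≃ V) (j : Fin (k+1)) (a : V) :
    (extGraph G k e).Adj (.inr j) (.inl a) ↔
      ∃ i : Fin k, e i = a ∧ ((i : ℕ) = j ∨ (i : ℕ) + 1 = j) := Iff.rfl

lemma extGraph_adj_inl_inr (G : SimpleGraph V) (k : ℕ) (e : Fin k ≃ V) (j : Fin (k+1)) (a : V) :
    (extGraph G k e).Adj (.inl a) (.inr j) ↔
      ∃ i : Fin k, e i = a ∧ ((i : ℕ) = j ∨ (i : ℕ) + 1 = j) := Iff.rfl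

/-- The interleaved vertex list, from index `m` with `m + c = k`. -/
def pl {k : ℕ} (e : Fin k ≃ V) : (c m : ℕ) → m + c = k → List (V ⊕ Fin (k + 1))
  | 0, _, _ => [.inr (Fin.last k)]
  | c + 1, m, h => .inr ⟨m, by omega⟩ :: .inl (e ⟨m, by omega⟩) :: pl e c (m + 1) (by omega)

lemma pl_head {k : ℕ} (e : Fin k ≃ V) (c m : ℕ) (h : m + c = k) (hm : m < k + 1) :
    ∃ t, pl e c m h = .inr ⟨m, hm⟩ :: t := by
  cases c with
  | zero => exact ⟨[], by simp only [pl]; congr 2; exact Fin.ext (by simpa using h.symm)⟩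
  | succ c => exact ⟨_, rfl⟩

lemma mem_pl {k : ℕ} (e : Fin k ≃ V) (c m : ℕ) (h : m + c = k) (x : V ⊕ Fin (k+1)) :
    x ∈ pl e c m h ↔ (∃ j : Fin (k+1), x = .inr j ∧ m ≤ (j : ℕ)) ∨
      (∃ i : Fin k, x = .inl (e i) ∧ m ≤ (i : ℕ)) := by
  induction c generalizing m with
  | zero =>
    simp only [pl, List.mem_singleton]
    constructor
    · rintro rfl; exact Or.inl ⟨Fin.last k, rfl, by simp [Fin.last]; omega⟩
    · rintro (⟨j, rfl, hj⟩ | ⟨i, rfl, hi⟩)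
      · congr 1; exact Fin.ext (by simp [Fin.last]; omega)
      · exact absurd hi (by omega)
  | succ c ih =>
    simp only [pl, List.mem_cons, ih (m + 1) (by omega)]
    constructor
    · rintro (rfl | rfl | ⟨j, rfl, hj⟩ | ⟨i, rfl, hi⟩)
      · exact Or.inl ⟨_, rfl, le_refl _⟩
      · exact Or.inr ⟨_, rfl, le_refl _⟩
      · exact Or.inl ⟨j, rfl, by omega⟩
      · exact Or.inr ⟨i, rfl, by omega⟩
    · rintro (⟨j, rfl, hj⟩ | ⟨i, rfl, hi⟩)
      · rcases eq_or_lt_of_le hj with hj' | hj'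
        · exact Or.inl (by congr 1; exact Fin.ext hj'.symm)
        · exact Or.inr (Or.inr (Or.inl ⟨j, rfl, by omega⟩))
      · rcases eq_or_lt_of_le hi with hi' | hi'
        · refine Or.inr (Or.inl ?_); congr 2; exact Fin.ext hi'.symm
        · exact Or.inr (Or.inr (Or.inr ⟨i, rfl, by omega⟩))

lemma nodup_pl {k : ℕ} (e : Fin k ≃ V) (c m : ℕ) (h : m + c = k) :
    (pl e c m h).Nodup := by
  induction c generalizing m with
  | zero => simp [pl]
  | succ c ih =>
    simp only [pl, List.nodup_cons, List.mem_cons, mem_pl]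
    refine ⟨?_, ?_, ih (m + 1) (by omega)⟩
    · rintro (h' | ⟨j, hj, hj2⟩ | ⟨i, hi, _⟩)
      · exact absurd h' (by simp)
      · obtain rfl := Sum.inr.inj hj
        simp at hj2
      · exact absurd hi (by simp)
    · rintro (⟨j, hj, _⟩ | ⟨i, hi, h2⟩)
      · exact absurd hj (by simp)
      · have h3 : (⟨m, by omega⟩ : Fin k) = i := e.injective (Sum.inl.inj hi)
        have : (i : ℕ) = m := by rw [← h3]
        omega

lemma chain'_pl (G : SimpleGraph V) {k : ℕ} (e : Fin k ≃ V) (c m : ℕ) (h : m + c = k) :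
    List.Chain' (extGraph G k e).Adj (pl e c m h) := by
  induction c generalizing m with
  | zero => simp only [pl]; exact List.isChain_singleton _
  | succ c ih =>
    have hm : m < k := by omega
    obtain ⟨t, ht⟩ := pl_head e c (m + 1) (by omega) (by omega)
    simp only [pl, ht]
    show List.IsChain _ _
    rw [List.isChain_cons_cons, List.isChain_cons_cons]
    refine ⟨⟨⟨m, hm⟩, rfl, Or.inl rfl⟩, ⟨⟨m, hm⟩, rfl, Or.inr rfl⟩, ?_⟩
    rw [← ht]
    exact ih (m + 1) (by omega)

lemma walk_of_chain {α : Type*} (G : SimpleGraph α) :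
    ∀ (L : List α), L ≠ [] → L.Chain' G.Adj →
      ∃ (x y : α) (w : G.Walk x y), w.support = L := by
  intro L
  induction L with
  | nil => intro h; exact absurd rfl h
  | cons a L ih =>
    intro _ hc
    cases L with
    | nil => exact ⟨a, a, SimpleGraph.Walk.nil, rfl⟩
    | cons b L' =>
      obtain ⟨hab, hc'⟩ := List.isChain_cons_cons.mp hc
      obtain ⟨x, y, w, hw⟩ := ih (by simp) hc'
      have hx : x = b := by
        have := w.support_eq_cons
        rw [hw] at this
        exact (List.head_eq_of_cons_eq this.symm)  -- may not exist
      subst hx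
      exact ⟨a, y, SimpleGraph.Walk.cons hab w, by simp [hw]⟩

end AuxA

section AuxB
variable {V : Type*} [Fintype V]

lemma exists_hamiltonian (G : SimpleGraph V) (k : ℕ) (e : Fin k ≃ V) :
    ∃ (x y : V ⊕ Fin (k+1)) (w : (extGraph G k e).Walk x y), w.IsHamiltonian := by
  obtain ⟨t, ht⟩ := pl_head e k 0 (by omega) (by omega)
  obtain ⟨x, y, w, hw⟩ := walk_of_chain (extGraph G k e) (pl e k 0 (by omega))
    (by rw [ht]; simp) (chain'_pl G e k 0 (by omega))
  refine ⟨x, y, w, fun v => ?_⟩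
  rw [hw]
  refine @List.count_eq_one_of_mem _ instBEqOfDecidableEq _ _ _ (nodup_pl e k 0 (by omega)) ?_
  rw [mem_pl]
  cases v with
  | inl a => exact Or.inr ⟨e.symm a, by simp, Nat.zero_le _⟩
  | inr j => exact Or.inl ⟨j, rfl, Nat.zero_le _⟩

lemma mem_oddNbhd_map (G : SimpleGraph V) (k : ℕ) (e : Fin k ≃ V) (s : Finset V) (b : V) :
    Sum.inl b ∈ oddNbhd (extGraph G k e) (s.map ⟨Sum.inl, Sum.inl_injective⟩) ↔
      b ∈ oddNbhd G s := by
  simp only [oddNbhd, Finset.mem_filter, Finset.mem_univ, true_and]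
  rw [Finset.filter_map, Finset.card_map]
  have : s.filter ((fun w => (extGraph G k e).Adj (.inl b) w) ∘
      (⟨Sum.inl, Sum.inl_injective⟩ : V ↪ V ⊕ Fin (k+1))) = s.filter (fun w => G.Adj b w) :=
    Finset.filter_congr fun w _ => by simp [Function.comp]
  rw [this]

lemma not_inr_mem_odd_singleton (G : SimpleGraph V) (k : ℕ) (e : Fin k ≃ V)
    (j j' : Fin (k+1)) :
    Sum.inr j' ∉ oddNbhd (extGraph G k e) ({Sum.inr j} : Finset (V ⊕ Fin (k+1))) := by
  simp [oddNbhd, Finset.filter_singleton]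

lemma hasPauliFlow_ext (G : SimpleGraph V) (k : ℕ) (e : Fin k ≃ V) (I O : Finset V)
    (lam : V → MeasLabel) (h : HasPauliFlow G I O lam) :
    HasPauliFlow (extGraph G k e) (I.map ⟨Sum.inl, Sum.inl_injective⟩)
      (O.map ⟨Sum.inl, Sum.inl_injective⟩) (Sum.elim lam fun _ => .Z) := by
  obtain ⟨p, lt, h1, h2, h3⟩ := h
  refine ⟨Sum.elim (fun a => (p a).map ⟨Sum.inl, Sum.inl_injective⟩) (fun j => {Sum.inr j}),
    fun x y => (∃ a b, x = .inl a ∧ y = .inl b ∧ lt a b) ∨ (x.isRight ∧ y.isLeft),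
    ?_, ?_, ?_⟩
  · rintro (a | j) (⟨a', b', ha, hb, hl⟩ | ⟨hr, _⟩)
    · obtain rfl := Sum.inl.inj ha
      obtain rfl := Sum.inl.inj hb
      exact h1 _ hl
    · simp at hr
    · obtain ⟨⟩ := ha
    · simp at *
  · rintro x y z (⟨a, b, rfl, rfl, hab⟩ | ⟨hr, hl⟩) (⟨b', c, hb, rfl, hbc⟩ | ⟨hr', hl'⟩)
    · obtain rfl := Sum.inl.inj hb
      exact Or.inl ⟨a, c, rfl, rfl, h2 _ _ _ hab hbc⟩
    · simp at hr'
    · exact Or.inr ⟨hr, by simp⟩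
    · exact Or.inr ⟨hr, hl'⟩
  · rintro (a | j) hv
    · -- old vertex
      have ha : a ∉ O := fun hO => hv (Finset.mem_map_of_mem _ hO)
      obtain ⟨c1, c2, c3, c4, c5, c6, c7, c8, c9, c10⟩ := h3 a ha
      have hmem : ∀ b : V, (Sum.inl b : V ⊕ Fin (k+1)) ∈
          (p a).map (⟨Sum.inl, Sum.inl_injective⟩ : V ↪ (V ⊕ Fin (k+1))) ↔
          b ∈ p a := fun b => by simp
      refine ⟨?_, ?_, ?_, ?_, ?_, ?_, ?_, ?_, ?_, ?_⟩
      · rintro w hw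
        simp only [Sum.elim_inl, Finset.mem_map] at hw
        obtain ⟨b, hb, rfl⟩ := hw
        simp only [Finset.mem_map]
        rintro ⟨b', hb', hbb⟩
        have hb'b : b' = b := by simpa using hbb
        subst hb'b
        exact c1 _ hb hb'
      · rintro w hw hX hY hne
        simp only [Sum.elim_inl, Finset.mem_map] at hw
        obtain ⟨b, hb, rfl⟩ := hw
        exact Or.inl ⟨a, b, rfl, rfl, c2 b hb hX hY (fun hab => hne (by simp [hab]))⟩
      · rintro (b | j) hw hY hZ hne
        · rw [Sum.elim_inl, mem_oddNbhd_map] at hw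
          exact Or.inl ⟨a, b, rfl, rfl, c3 b hw hY hZ (fun hab => hne (by simp [hab]))⟩
        · exact absurd rfl hZ
      · rintro (b | j) hw hY hne
        · have hba : lt b a ∨ b = a := by
            rcases hw with (⟨b', a', hb, ha', hl⟩ | ⟨hr, _⟩) | heq
            · obtain rfl := Sum.inl.inj hb
              obtain rfl := Sum.inl.inj ha'
              exact Or.inl hl
            · simp at hr
            · exact Or.inr (Sum.inl.inj heq)
          rw [Sum.elim_inl, hmem, mem_oddNbhd_map]
          exact c4 b hba hY (fun hab => hne (by simp [hab]))
        · simp at hY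
      · intro hXY
        rw [Sum.elim_inl] at hXY
        rw [Sum.elim_inl, hmem, mem_oddNbhd_map]
        exact c5 hXY
      · intro hXZ
        rw [Sum.elim_inl] at hXZ
        rw [Sum.elim_inl, hmem, mem_oddNbhd_map]
        exact c6 hXZ
      · intro hYZ
        rw [Sum.elim_inl] at hYZ
        rw [Sum.elim_inl, hmem, mem_oddNbhd_map]
        exact c7 hYZ
      · intro hX
        rw [Sum.elim_inl] at hX
        rw [Sum.elim_inl, mem_oddNbhd_map]
        exact c8 hX
      · intro hZ
        rw [Sum.elim_inl] at hZ
        rw [Sum.elim_inl, hmem]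
        exact c9 hZ
      · intro hY
        rw [Sum.elim_inl] at hY
        rw [Sum.elim_inl, hmem, mem_oddNbhd_map]
        exact c10 hY
    · -- new vertex
      refine ⟨?_, ?_, ?_, ?_, ?_, ?_, ?_, ?_, ?_, ?_⟩
      · rintro w hw
        simp only [Sum.elim_inr, Finset.mem_singleton] at hw
        subst hw
        simp
      · rintro w hw _ _ hne
        simp only [Sum.elim_inr, Finset.mem_singleton] at hw
        exact absurd hw.symm hne
      · rintro (b | j') hw _ hZ hne
        · exact Or.inr ⟨by simp, by simp⟩
        · rw [Sum.elim_inr] at hw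
          exact absurd hw (not_inr_mem_odd_singleton G k e j j')
      · rintro w hw hY hne
        have : w = Sum.inr j := by
          rcases hw with (⟨a', b', ha, hb, _⟩ | ⟨_, hl⟩) | rfl
          · simp at hb
          · simp at hl
          · rfl
        subst this
        exact absurd hY (by simp)
      · exact fun hXY => nomatch hXY
      · exact fun hXZ => nomatch hXZ
      · exact fun hYZ => nomatch hYZ
      · exact fun hX => nomatch hX
      · exact fun _ => by simp
      · exact fun hY => nomatch hY

end AuxB

open Complex

/-- Unnormalised amplitude `⟨+_{λ,α}|t⟩` of a single-qubit measurement effect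
(spider convention, so that a Z-measurement with outcome `0` deletes the
vertex exactly). -/
noncomputable def effAmp : MeasLabel → ℝ → Fin 2 → ℂ
  | .XY, α, t => Complex.exp (Complex.I * α * (t : ℕ))
  | .YZ, α, t => 1 + Complex.exp (Complex.I * α) * (-1 : ℂ) ^ (t : ℕ)
  | .XZ, α, t => (-Complex.I) ^ (t : ℕ) + Complex.exp (Complex.I * α) * Complex.I ^ (t : ℕ)
  | .X, _, t => 1 + (-1 : ℂ) ^ (t : ℕ)
  | .Y, _, t => (-Complex.I) ^ (t : ℕ)
  | .Z, _, t => if t = 0 then 1 else 0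

/-- Number of edges of `G` whose endpoints are both `1` in configuration `z`. -/
noncomputable def edgeCountOnes {V : Type*} [Fintype V] (G : SimpleGraph V)
    (z : V → Fin 2) : ℕ :=
  (Finset.univ.filter fun e : Sym2 V => e ∈ G.edgeSet ∧ ∀ w ∈ e, z w = 1).card

/-- Matrix entry of the target linear map
`T(M) = (∏_{v∉O} ⟨+_{λ(v),α(v)}|_v) E_G N_{V∖I}` of a labelled open graph,
between the input basis configuration `zi` (on `I`) and the output basis
configuration `zo` (on `O`). -/
noncomputable def targetAmp {V : Type*} [Fintype V] (G : SimpleGraph V)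
    (I O : Finset V) (lam : V → MeasLabel) (alp : V → ℝ)
    (zi zo : V → Fin 2) : ℂ :=
  ∑ z : V → Fin 2,
    (if (∀ v ∈ I, z v = zi v) ∧ (∀ v ∈ O, z v = zo v) then 1 else 0) *
      (-1 : ℂ) ^ (edgeCountOnes G z) *
      ∏ v ∈ Finset.univ \ O, effAmp (lam v) (alp v) (z v)


section AuxC
variable {V : Type*} [Fintype V]

lemma edgeCountOnes_ext (G : SimpleGraph V) (k : ℕ) (e : Fin k ≃ V) (zV : V → Fin 2) :
    edgeCountOnes (extGraph G k e) (Sum.elim zV fun _ => 0) = edgeCountOnes G zV := by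
  unfold edgeCountOnes
  symm
  apply Finset.card_nbij (Sym2.map Sum.inl)
  · intro x hx
    induction x using Sym2.ind with
    | _ c d =>
      simp only [Finset.coe_filter, Set.mem_setOf_eq, Finset.mem_filter, Finset.mem_univ, true_and, SimpleGraph.mem_edgeSet,
        Sym2.mem_iff, forall_eq_or_imp, forall_eq] at hx
      obtain ⟨hadj, h1, h2⟩ := hx
      simp only [Sym2.map_pair_eq, Finset.coe_filter, Set.mem_setOf_eq, Finset.mem_filter, Finset.mem_univ, true_and,
        SimpleGraph.mem_edgeSet, Sym2.mem_iff, forall_eq_or_imp, forall_eq]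
      exact ⟨hadj, by simpa using h1, by simpa using h2⟩
  · exact (Sym2.map.injective Sum.inl_injective).injOn
  · intro x hx
    induction x using Sym2.ind with
    | _ u v =>
      simp only [Finset.coe_filter, Finset.mem_univ, true_and, Set.mem_setOf_eq,
        SimpleGraph.mem_edgeSet, Sym2.mem_iff, forall_eq_or_imp, forall_eq] at hx
      obtain ⟨hadj, h1, h2⟩ := hx
      cases u with
      | inr j => simp at h1
      | inl a =>
        cases v with
        | inr j => simp at h2
        | inl b =>
          refine ⟨s(a, b), ?_, by simp⟩
          simp only [Finset.coe_filter, Finset.mem_univ, true_and, Set.mem_setOf_eq,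
            SimpleGraph.mem_edgeSet, Sym2.mem_iff, forall_eq_or_imp, forall_eq]
          exact ⟨hadj, by simpa using h1, by simpa using h2⟩

lemma sdiff_inst_congr {α : Type*} {i1 i2 : DecidableEq α} (s t : Finset α) :
    @SDiff.sdiff _ (@Finset.instSDiff _ i1) s t = @SDiff.sdiff _ (@Finset.instSDiff _ i2) s t := by
  have h : i1 = i2 := funext fun a => funext fun b => Subsingleton.elim _ _
  subst h
  rfl

lemma ite_inst_congr {α : Sort*} {c : Prop} (i1 i2 : Decidable c) (a b : α) :
    @ite _ c i1 a b = @ite _ c i2 a b := by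
  have h : i1 = i2 := Subsingleton.elim _ _
  rw [h]

lemma targetAmp_ext (G : SimpleGraph V) (k : ℕ) (e : Fin k ≃ V) (I O : Finset V)
    (lam : V → MeasLabel) (alp : V → ℝ) (zi zo : V → Fin 2) :
    targetAmp (extGraph G k e) (I.map ⟨Sum.inl, Sum.inl_injective⟩)
      (O.map ⟨Sum.inl, Sum.inl_injective⟩) (Sum.elim lam fun _ => .Z) (Sum.elim alp 0)
      (Sum.elim zi fun _ => 0) (Sum.elim zo fun _ => 0) = targetAmp G I O lam alp zi zo := by
  classical
  unfold targetAmp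
  refine Eq.trans (b := ∑ p : (V → Fin 2) × (Fin (k+1) → Fin 2),
      (if ((∀ v ∈ I.map (⟨Sum.inl, Sum.inl_injective⟩ : V ↪ V ⊕ Fin (k+1)),
              Sum.elim p.1 p.2 v = Sum.elim zi (fun _ => 0) v) ∧
           (∀ v ∈ O.map (⟨Sum.inl, Sum.inl_injective⟩ : V ↪ V ⊕ Fin (k+1)),
              Sum.elim p.1 p.2 v = Sum.elim zo (fun _ => 0) v)) then (1 : ℂ) else 0) *
        (-1 : ℂ) ^ (edgeCountOnes (extGraph G k e) (Sum.elim p.1 p.2)) *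
        ∏ v ∈ Finset.univ \ O.map ⟨Sum.inl, Sum.inl_injective⟩,
          effAmp (Sum.elim lam (fun _ => .Z) v) (Sum.elim alp 0 v) (Sum.elim p.1 p.2 v)) ?_ ?_
  · refine Finset.sum_equiv (Equiv.sumArrowEquivProdArrow V (Fin (k+1)) (Fin 2))
      (by simp) (fun z _ => ?_)
    simp only [Equiv.sumArrowEquivProdArrow, Equiv.coe_fn_mk, Sum.elim_comp_inl_inr]
    exact congrArg₂ _ (congrArg₂ _ (ite_inst_congr _ _ _ _) rfl)
      (Finset.prod_congr (sdiff_inst_congr _ _) fun _ _ => rfl)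
  · rw [Fintype.sum_prod_type]
    refine Finset.sum_congr rfl fun zV _ => ?_
    have hdisj : Disjoint
        ((Finset.univ \ O).map (⟨Sum.inl, Sum.inl_injective⟩ : V ↪ V ⊕ Fin (k+1)))
        ((Finset.univ : Finset (Fin (k+1))).map ⟨Sum.inr, Sum.inr_injective⟩) := by
      simp [Finset.disjoint_left]
    have huniv : (Finset.univ : Finset (V ⊕ Fin (k+1))) \
        O.map ⟨Sum.inl, Sum.inl_injective⟩ =
        ((Finset.univ \ O).map (⟨Sum.inl, Sum.inl_injective⟩ : V ↪ V ⊕ Fin (k+1))) ∪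
        ((Finset.univ : Finset (Fin (k+1))).map ⟨Sum.inr, Sum.inr_injective⟩) := by
      ext (a | j) <;> simp
    have hsplit : ∀ zF : Fin (k+1) → Fin 2,
        (∏ v ∈ Finset.univ \ O.map ⟨Sum.inl, Sum.inl_injective⟩,
          effAmp (Sum.elim lam (fun _ => .Z) v) (Sum.elim alp 0 v) (Sum.elim zV zF v)) =
        (∏ v ∈ Finset.univ \ O, effAmp (lam v) (alp v) (zV v)) *
        ∏ j : Fin (k+1), (if zF j = 0 then (1 : ℂ) else 0) := by
      intro zF
      rw [huniv, Finset.prod_union hdisj, Finset.prod_map, Finset.prod_map]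
      rfl
    have hcond : ∀ zF : Fin (k+1) → Fin 2,
        ((∀ v ∈ I.map (⟨Sum.inl, Sum.inl_injective⟩ : V ↪ V ⊕ Fin (k+1)),
            Sum.elim zV zF v = Sum.elim zi (fun _ => 0) v) ∧
         (∀ v ∈ O.map (⟨Sum.inl, Sum.inl_injective⟩ : V ↪ V ⊕ Fin (k+1)),
            Sum.elim zV zF v = Sum.elim zo (fun _ => 0) v)) ↔
        ((∀ v ∈ I, zV v = zi v) ∧ (∀ v ∈ O, zV v = zo v)) := by
      intro zF
      simp
    rw [Finset.sum_eq_single_of_mem (0 : Fin (k+1) → Fin 2) (Finset.mem_univ _)]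
    · rw [hsplit 0]
      have hQ : (∏ j : Fin (k+1),
          (if (0 : Fin (k+1) → Fin 2) j = 0 then (1 : ℂ) else 0)) = 1 := by simp
      rw [hQ, mul_one]
      have hec2 : edgeCountOnes (extGraph G k e) (Sum.elim zV (0 : Fin (k+1) → Fin 2)) =
          edgeCountOnes G zV := edgeCountOnes_ext G k e zV
      rw [hec2]
      simp only [hcond 0]
    · intro zF _ hzF
      have hj : ∃ j, zF j ≠ 0 := by
        by_contra hc
        push_neg at hc
        exact hzF (funext hc)
      obtain ⟨j, hj⟩ := hj
      rw [hsplit zF, Finset.prod_eq_zero (Finset.mem_univ j)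
        (show (if zF j = 0 then (1 : ℂ) else 0) = 0 from if_neg hj)]
      ring

end AuxC

open Sum in
/-- Hamiltonian completion preserves flow and the target map: any labelled
open graph with Pauli flow can be extended, by adding vertices all measured in
the Z basis, to a labelled open graph with Pauli flow whose underlying graph
has a Hamiltonian path and whose target linear map is equal to the original
one. -/
theorem hamiltonian_completion {V : Type*} [Fintype V]
    (G : SimpleGraph V) (I O : Finset V) (lam : V → MeasLabel) (alp : V → ℝ)
    (h : HasPauliFlow G I O lam) :
    ∃ (n : ℕ) (G' : SimpleGraph (V ⊕ Fin n)) (lam' : V ⊕ Fin n → MeasLabel)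
      (alp' : V ⊕ Fin n → ℝ),
      HasPauliFlow G' (I.map ⟨inl, Sum.inl_injective⟩)
        (O.map ⟨inl, Sum.inl_injective⟩) lam' ∧
      (∀ j : Fin n, lam' (inr j) = .Z) ∧
      (∀ w : V, lam' (inl w) = lam w ∧ alp' (inl w) = alp w) ∧
      (∃ (x y : V ⊕ Fin n) (p : G'.Walk x y), p.IsHamiltonian) ∧
      (∀ zi zo : V → Fin 2,
        targetAmp G' (I.map ⟨inl, Sum.inl_injective⟩)
            (O.map ⟨inl, Sum.inl_injective⟩) lam' alp'
            (Sum.elim zi fun _ => 0) (Sum.elim zo fun _ => 0)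
          = targetAmp G I O lam alp zi zo) := by
  classical
  have e : Fin (Fintype.card V) ≃ V := (Fintype.equivFin V).symm
  exact ⟨Fintype.card V + 1, extGraph G (Fintype.card V) e,
    Sum.elim lam fun _ => .Z, Sum.elim alp 0,
    hasPauliFlow_ext G (Fintype.card V) e I O lam h, fun j => rfl, fun w => ⟨rfl, rfl⟩,
    exists_hamiltonian G (Fintype.card V) e,
    fun zi zo => targetAmp_ext G (Fintype.card V) e I O lam alp zi zo⟩
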